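/- The integers ℤ with their usual linear order are not sub-representable. -/

import Mathlib

def SubRepresentable (α : Type*) [PartialOrder α] : Prop :=
  ∃ g : Set α → Set α,
    (∀ P₁ P₂ : Set α, Nonempty (↥P₁ ↪o ↥P₂) ↔ g P₁ ⊆ g P₂) ∧
    ∀ P₁ : Set α, Nonempty (↥P₁ ↪o ↥(g P₁)) ∧ Nonempty (↥(g P₁) ↪o ↥P₁)

/-- Inclusion of subsets as an order embedding. -/
noncomputable def inclOE {s t : Set ℤ} (h : s ⊆ t) : ↥s ↪o ↥t :=
  OrderEmbedding.ofStrictMono (fun x => ⟨x.1, h x.2⟩)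
    (fun a b hab => by simpa [Subtype.mk_lt_mk] using hab)

lemma bddBelow_of_strictMono_nat (S : Set ℤ) (f : ↥S → ℕ) (hf : StrictMono f) :
    BddBelow S := by
  by_contra hb
  rw [not_bddBelow_iff] at hb
  have hwf : WellFoundedLT ↥S := hf.wellFoundedLT
  obtain ⟨x0, hx0, -⟩ := hb 0
  obtain ⟨m, -, hm⟩ := hwf.wf.has_min Set.univ ⟨⟨x0, hx0⟩, trivial⟩
  obtain ⟨y, hy, hlt⟩ := hb m.1
  exact hm ⟨y, hy⟩ trivial hlt

lemma bddAbove_of_strictAnti_nat (S : Set ℤ) (f : ↥S → ℕ) (hf : StrictAnti f) :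
    BddAbove S := by
  by_contra hb
  rw [not_bddAbove_iff] at hb
  have hwf : WellFoundedGT ↥S := hf.wellFoundedGT
  obtain ⟨x0, hx0, -⟩ := hb 0
  obtain ⟨m, -, hm⟩ := hwf.wf.has_min Set.univ ⟨⟨x0, hx0⟩, trivial⟩
  obtain ⟨y, hy, hlt⟩ := hb m.1
  exact hm ⟨y, hy⟩ trivial hlt

theorem int_not_subrep : ¬ SubRepresentable ℤ := by
  rintro ⟨g, hg1, hg2⟩
  -- g (Ici 0) is bounded below
  obtain ⟨e₁⟩ := (hg2 (Set.Ici (0:ℤ))).2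
  obtain ⟨e₂⟩ := (hg2 (Set.Iic (0:ℤ))).2
  have hBb : BddBelow (g (Set.Ici (0:ℤ))) := by
    refine bddBelow_of_strictMono_nat _ (fun x => ((e₁ x : ℤ)).toNat) ?_
    intro a b hab
    have h1 : (e₁ a : ℤ) < (e₁ b : ℤ) := by
      exact_mod_cast e₁.strictMono hab
    have h2 : (0:ℤ) ≤ (e₁ a : ℤ) := (e₁ a).2
    show ((e₁ a : ℤ)).toNat < ((e₁ b : ℤ)).toNat
    omega
  have hBa : BddAbove (g (Set.Iic (0:ℤ))) := by
    refine bddAbove_of_strictAnti_nat _ (fun x => (-(e₂ x : ℤ)).toNat) ?_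
    intro a b hab
    have h1 : (e₂ a : ℤ) < (e₂ b : ℤ) := by
      exact_mod_cast e₂.strictMono hab
    have h2 : (e₂ b : ℤ) ≤ 0 := (e₂ b).2
    show (-(e₂ b : ℤ)).toNat < (-(e₂ a : ℤ)).toNat
    omega
  -- V is finite
  set V : Set ℤ := g (Set.Ici (0:ℤ)) ∩ g (Set.Iic (0:ℤ)) with hV
  have hVb : BddBelow V := hBb.mono Set.inter_subset_left
  have hVa : BddAbove V := hBa.mono Set.inter_subset_right
  obtain ⟨a, ha⟩ := hVb
  obtain ⟨b, hb⟩ := hVa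
  have hVfin : V.Finite := (Set.finite_Icc a b).subset (fun x hx => ⟨ha hx, hb hx⟩)
  -- every g (Icc 0 m) is contained in V
  set m : ℕ := Nat.card ↥V with hm
  have hsub1 : g (Set.Icc (0:ℤ) m) ⊆ g (Set.Ici (0:ℤ)) :=
    (hg1 _ _).mp ⟨inclOE (Set.Icc_subset_Ici_self)⟩
  have hsub2 : g (Set.Icc (0:ℤ) m) ⊆ g (Set.Iic (0:ℤ)) := by
    refine (hg1 _ _).mp ⟨OrderEmbedding.ofStrictMono
      (fun x => ⟨x.1 - m, by have := x.2.2; simp only [Set.mem_Iic]; omega⟩) ?_⟩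
    intro x y hxy
    have : (x : ℤ) < y := hxy
    exact Subtype.mk_lt_mk.mpr (by omega)
  have hsubV : g (Set.Icc (0:ℤ) m) ⊆ V := fun x hx => ⟨hsub1 hx, hsub2 hx⟩
  -- Icc 0 m embeds into V, giving a cardinality contradiction
  obtain ⟨e⟩ := (hg2 (Set.Icc (0:ℤ) m)).1
  have hinj : Function.Injective (fun x : ↥(Set.Icc (0:ℤ) m) =>
      (⟨(e x : ℤ), hsubV (e x).2⟩ : ↥V)) := by
    intro x y hxy
    have h' : (e x : ℤ) = (e y : ℤ) := by simpa using congrArg Subtype.val hxy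
    exact e.injective (Subtype.ext h')
  haveI : Finite ↥V := hVfin.to_subtype
  have hcard : Nat.card ↥(Set.Icc (0:ℤ) m) ≤ Nat.card ↥V :=
    Nat.card_le_card_of_injective _ hinj
  have hIcc : Nat.card ↥(Set.Icc (0:ℤ) m) = m + 1 := by
    rw [Nat.card_coe_set_eq, ← Finset.coe_Icc, Set.ncard_coe_finset, Int.card_Icc]
    omega
  omega
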